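/- arXiv:2203.03052 — 2 statements merged into one kernel-verified Lean document; each statement's English description precedes it below -/
import Mathlib

section
/- Let m and N be positive integers, let a ∈ ℚ with 0 < |a| < 1, let b ∈ ℝ and τ ∈ ℍ, and set Y := e^{2πi(aNτ + b)}. Then Σ_{k∈ℤ} Y^{2km} q^{Nmk²} (Y q^{Nk} + 1)/(Y q^{Nk} − 1) = − e^{−4πi m a b} · q^{−N m a²} · Σ_{(k,l)∈ℤ²} ( sgn(k+a) + sgn(l) ) e^{2πi(2m(k+a)+l)b} q^{N( m(k+a)² + (k+a)l )}, and all series converge absolutely. (The second factor on the right is the holomorphic indefinite theta function Θ_{(a,0),(b,0)}(Nτ) of the paper, for the quadratic form with matrix A = [[2m,1],[1,0]] and vectors c₁ = (0,1), c₂ = (−1,2m).) -/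
open Complex Real

/-- `qp τ c` is `q^c = e^{2πicτ}`. -/
noncomputable def qp (τ : ℂ) (c : ℝ) : ℂ := Complex.exp (2 * Real.pi * Complex.I * c * τ)

/-- `ph x = e^{2πix}` for real `x`. -/
noncomputable def ph (x : ℝ) : ℂ := Complex.exp (2 * Real.pi * Complex.I * x)

lemma norm_qp (τ : ℂ) (c : ℝ) : ‖qp τ c‖ = Real.exp (-(2 * Real.pi * τ.im * c)) := by
  rw [qp, Complex.norm_exp]
  congr 1
  simp [Complex.mul_re, Complex.mul_im]
  ring
lemma norm_ph (x : ℝ) : ‖ph x‖ = 1 := by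
  rw [ph, Complex.norm_exp]
  simp [Complex.mul_re, Complex.mul_im]

lemma summable_exp_abs {c : ℝ} (hc : 0 < c) :
    Summable fun k : ℤ => Real.exp (-(c * |(k : ℝ)|)) := by
  have hgeom : Summable fun n : ℕ => Real.exp (-c) ^ n :=
    summable_geometric_of_lt_one (Real.exp_nonneg _)
      (Real.exp_lt_one_iff.mpr (by linarith))
  have key : ∀ n : ℕ, Real.exp (-(c * (n : ℝ))) = Real.exp (-c) ^ n := by
    intro n
    rw [← Real.exp_nat_mul]
    congr 1; ring
  apply Summable.of_nat_of_neg
  · refine hgeom.congr fun n => ?_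
    rw [← key n]
    congr 1
    simp
  · refine hgeom.congr fun n => ?_
    rw [← key n]
    congr 1
    simp


lemma signed_geom {u : ℂ} {s : ℝ} (hu0 : u ≠ 0)
    (h : (s = 1 ∧ ‖u‖ < 1) ∨ (s = -1 ∧ 1 < ‖u‖)) :
    ∑' l : ℤ, ((s + Real.sign (l : ℝ) : ℝ) : ℂ) * u ^ l = -((u + 1) / (u - 1)) := by
  set f : ℤ → ℂ := fun l => ((s + Real.sign (l : ℝ) : ℝ) : ℂ) * u ^ l with hf
  rcases h with ⟨hs, hu⟩ | ⟨hs, hu⟩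
  · have hu1 : u ≠ 1 := by intro h1; rw [h1] at hu; simp at hu
    have hpos : ∀ n : ℕ, f ((n : ℤ) + 1) = (2 * u) * u ^ n := by
      intro n
      have hsg : Real.sign (((n : ℤ) + 1 : ℤ) : ℝ) = 1 := by
        apply Real.sign_of_pos; push_cast; positivity
      rw [hf]
      simp only [hsg, hs]
      rw [show ((n : ℤ) + 1 : ℤ) = ((n + 1 : ℕ) : ℤ) by push_cast; ring, zpow_natCast,
        pow_succ]
      push_cast; ring
    have hneg : ∀ n : ℕ, f (-((n : ℤ) + 1)) = 0 := by
      intro n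
      have hsg : Real.sign ((-((n : ℤ) + 1) : ℤ) : ℝ) = -1 := by
        apply Real.sign_of_neg; push_cast; linarith [Nat.cast_nonneg (α := ℝ) n]
      rw [hf]
      simp only [hsg, hs]
      norm_num
    have hf0 : f 0 = 1 := by rw [hf]; simp [hs]
    have hsum1 : Summable fun n : ℕ => f ((n : ℤ) + 1) :=
      ((summable_geometric_of_norm_lt_one hu).mul_left (2 * u)).congr fun n => (hpos n).symm
    have hsum2 : Summable fun n : ℕ => f (-((n : ℤ) + 1)) :=
      summable_zero.congr fun n => (hneg n).symm
    rw [tsum_of_add_one_of_neg_add_one hsum1 hsum2]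
    rw [tsum_congr hpos, tsum_congr hneg, tsum_mul_left,
      tsum_geometric_of_norm_lt_one hu, hf0, tsum_zero]
    have h1u : (1 : ℂ) - u ≠ 0 := sub_ne_zero.mpr (Ne.symm hu1)
    have hu1' : u - 1 ≠ 0 := sub_ne_zero.mpr hu1
    field_simp
    ring
  · have hu1 : u ≠ 1 := by intro h1; rw [h1] at hu; simp at hu
    have hv : ‖u⁻¹‖ < 1 := by
      rw [norm_inv]
      rw [inv_lt_one_iff₀]
      right; exact hu
    have hpos : ∀ n : ℕ, f ((n : ℤ) + 1) = 0 := by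
      intro n
      have hsg : Real.sign (((n : ℤ) + 1 : ℤ) : ℝ) = 1 := by
        apply Real.sign_of_pos; push_cast; positivity
      rw [hf]
      simp only [hsg, hs]
      norm_num
    have hneg : ∀ n : ℕ, f (-((n : ℤ) + 1)) = (-2 * u⁻¹) * (u⁻¹) ^ n := by
      intro n
      have hsg : Real.sign ((-((n : ℤ) + 1) : ℤ) : ℝ) = -1 := by
        apply Real.sign_of_neg; push_cast; linarith [Nat.cast_nonneg (α := ℝ) n]
      rw [hf]
      simp only [hsg, hs]
      rw [zpow_neg, show ((n : ℤ) + 1 : ℤ) = ((n + 1 : ℕ) : ℤ) by push_cast; ring,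
        zpow_natCast, ← inv_pow, pow_succ]
      push_cast; ring
    have hf0 : f 0 = -1 := by rw [hf]; simp [hs]
    have hsum1 : Summable fun n : ℕ => f ((n : ℤ) + 1) :=
      summable_zero.congr fun n => (hpos n).symm
    have hsum2 : Summable fun n : ℕ => f (-((n : ℤ) + 1)) :=
      ((summable_geometric_of_norm_lt_one hv).mul_left (-2 * u⁻¹)).congr fun n => (hneg n).symm
    rw [tsum_of_add_one_of_neg_add_one hsum1 hsum2]
    rw [tsum_congr hpos, tsum_congr hneg, tsum_mul_left,
      tsum_geometric_of_norm_lt_one hv, hf0, tsum_zero]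
    have hvi : u⁻¹ ≠ 1 := fun h1 => hu1 (by rw [← inv_inv u, h1, inv_one])
    have h1u : (1 : ℂ) - u⁻¹ ≠ 0 := sub_ne_zero.mpr (Ne.symm hvi)
    have hu1' : u - 1 ≠ 0 := sub_ne_zero.mpr hu1
    field_simp
    ring

set_option maxHeartbeats 2000000 in
/-- `μ_{m,0}(aNτ+b, Nτ) = -e^{-4πimab} q^{-Nma²} Θ_{(a,0),(b,0)}(Nτ)` for `0 < |a| < 1`,
where `Θ` is the holomorphic indefinite theta function attached to `A = [[2m,1],[1,0]]`,
`c₁ = (0,1)`, `c₂ = (-1,2m)`. -/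
theorem specialized_appell_lerch_specialization
    (m N : ℕ) (hm : 0 < m) (hN : 0 < N) (a : ℚ) (ha0 : 0 < |a|) (ha1 : |a| < 1)
    (b : ℝ) (τ : ℂ) (hτ : 0 < τ.im)
    (Y : ℂ) (hY : Y = Complex.exp (2 * Real.pi * Complex.I * ((a : ℂ) * N * τ + b))) :
    Summable (fun k : ℤ =>
      ‖Y ^ (2 * k * (m : ℤ)) * qp τ ((N : ℝ) * (m : ℝ) * (k : ℝ) ^ 2) *
        ((Y * qp τ ((N : ℝ) * (k : ℝ)) + 1) / (Y * qp τ ((N : ℝ) * (k : ℝ)) - 1))‖) ∧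
    Summable (fun n : ℤ × ℤ =>
      ‖((Real.sign ((n.1 : ℝ) + (a : ℝ)) + Real.sign (n.2 : ℝ) : ℝ) : ℂ) *
        (ph ((2 * (m : ℝ) * ((n.1 : ℝ) + (a : ℝ)) + (n.2 : ℝ)) * b) *
          qp τ ((N : ℝ) * ((m : ℝ) * ((n.1 : ℝ) + (a : ℝ)) ^ 2 +
            ((n.1 : ℝ) + (a : ℝ)) * (n.2 : ℝ))))‖) ∧
    (∑' k : ℤ, Y ^ (2 * k * (m : ℤ)) * qp τ ((N : ℝ) * (m : ℝ) * (k : ℝ) ^ 2) *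
        ((Y * qp τ ((N : ℝ) * (k : ℝ)) + 1) / (Y * qp τ ((N : ℝ) * (k : ℝ)) - 1))) =
      -(Complex.exp (-(4 * Real.pi * Complex.I * (m : ℝ) * (a : ℝ) * b)) *
        (qp τ (-((N : ℝ) * (m : ℝ) * (a : ℝ) ^ 2)) *
        ∑' n : ℤ × ℤ,
          ((Real.sign ((n.1 : ℝ) + (a : ℝ)) + Real.sign (n.2 : ℝ) : ℝ) : ℂ) *
            (ph ((2 * (m : ℝ) * ((n.1 : ℝ) + (a : ℝ)) + (n.2 : ℝ)) * b) *
              qp τ ((N : ℝ) * ((m : ℝ) * ((n.1 : ℝ) + (a : ℝ)) ^ 2 +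
                ((n.1 : ℝ) + (a : ℝ)) * (n.2 : ℝ)))))) := by
  have hπ := Real.pi_pos
  set α : ℝ := (a : ℝ) with hα
  have hα0 : 0 < |α| := by rw [hα, ← Rat.cast_abs]; exact_mod_cast ha0
  have hα1 : |α| < 1 := by rw [hα, ← Rat.cast_abs]; exact_mod_cast ha1
  set t : ℝ := 2 * Real.pi * τ.im with ht
  have ht0 : 0 < t := by positivity
  set δ : ℝ := min |α| (1 - |α|) with hδ
  have hδ0 : 0 < δ := lt_min hα0 (by linarith)
  have hδk : ∀ k : ℤ, δ ≤ |(k : ℝ) + α| := by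
    intro k
    rcases lt_trichotomy k 0 with hk | hk | hk
    · have hk1 : (k : ℝ) ≤ -1 := by exact_mod_cast (by omega : k ≤ -1)
      refine le_abs.mpr (Or.inr ?_)
      have := le_abs_self α
      have := min_le_right |α| (1 - |α|)
      simp only [hδ] at *
      linarith
    · subst hk
      have h0 : ((0 : ℤ) : ℝ) + α = α := by simp
      rw [h0, hδ]
      exact min_le_left _ _
    · have hk1 : (1 : ℝ) ≤ (k : ℝ) := by exact_mod_cast (by omega : (1:ℤ) ≤ k)
      refine le_abs.mpr (Or.inl ?_)
      have := neg_abs_le α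
      have := min_le_right |α| (1 - |α|)
      simp only [hδ] at *
      linarith
  have hka : ∀ k : ℤ, (k : ℝ) + α ≠ 0 := by
    intro k h
    have := hδk k
    rw [h] at this
    simp at this
    linarith
  have hsq : ∀ k : ℤ, |(k : ℝ)| - 2 ≤ ((k : ℝ) + α) ^ 2 := by
    intro k
    have h1 : |(k : ℝ)| - 1 ≤ |(k : ℝ) + α| := by
      have h2 : |(k : ℝ)| ≤ |(k : ℝ) + α| + |α| := by
        calc |(k : ℝ)| = |((k : ℝ) + α) + (-α)| := by ring_nf
          _ ≤ |(k : ℝ) + α| + |(-α)| := abs_add_le _ _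
          _ = |(k : ℝ) + α| + |α| := by rw [abs_neg]
      linarith
    nlinarith [sq_nonneg (|(k : ℝ) + α| - 1), _root_.sq_abs ((k : ℝ) + α), abs_nonneg ((k:ℝ) + α)]
  set F : ℤ × ℤ → ℂ := fun n =>
      ((Real.sign ((n.1 : ℝ) + (a : ℝ)) + Real.sign (n.2 : ℝ) : ℝ) : ℂ) *
        (ph ((2 * (m : ℝ) * ((n.1 : ℝ) + (a : ℝ)) + (n.2 : ℝ)) * b) *
          qp τ ((N : ℝ) * ((m : ℝ) * ((n.1 : ℝ) + (a : ℝ)) ^ 2 +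
            ((n.1 : ℝ) + (a : ℝ)) * (n.2 : ℝ)))) with hFdef
  have hnormF : ∀ n : ℤ × ℤ, ‖F n‖ =
      |Real.sign ((n.1 : ℝ) + α) + Real.sign ((n.2 : ℝ))| *
        Real.exp (-(t * ((N : ℝ) * ((m : ℝ) * ((n.1 : ℝ) + α) ^ 2 +
          ((n.1 : ℝ) + α) * (n.2 : ℝ))))) := by
    intro n
    rw [hFdef]
    simp only [norm_mul, Complex.norm_real, Real.norm_eq_abs, norm_ph, one_mul, norm_qp]
    rw [hα, ht]
  have habs_sign : ∀ x : ℝ, |Real.sign x| ≤ 1 := by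
    intro x
    rcases lt_trichotomy x 0 with h | h | h
    · simp [Real.sign_of_neg h]
    · simp [h]
    · simp [Real.sign_of_pos h]
  have hbound : ∀ n : ℤ × ℤ, ‖F n‖ ≤
      (2 * Real.exp (2 * (t * N * m)) * Real.exp (-(t * N * m * |(n.1 : ℝ)|))) *
        Real.exp (-(t * N * δ * |(n.2 : ℝ)|)) := by
    rintro ⟨k, l⟩
    rw [hnormF]
    dsimp only
    by_cases hkl : 0 ≤ ((k : ℝ) + α) * (l : ℝ)
    · have hs2 : |Real.sign ((k : ℝ) + α) + Real.sign ((l : ℝ))| ≤ 2 := by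
        calc |Real.sign ((k : ℝ) + α) + Real.sign ((l : ℝ))|
            ≤ |Real.sign ((k : ℝ) + α)| + |Real.sign ((l : ℝ))| := abs_add_le _ _
          _ ≤ 2 := by linarith [habs_sign ((k : ℝ) + α), habs_sign ((l : ℝ))]
      have hprod : δ * |(l : ℝ)| ≤ ((k : ℝ) + α) * (l : ℝ) := by
        calc δ * |(l : ℝ)| ≤ |(k : ℝ) + α| * |(l : ℝ)| :=
              mul_le_mul_of_nonneg_right (hδk k) (abs_nonneg _)
          _ = |((k : ℝ) + α) * (l : ℝ)| := (abs_mul _ _).symm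
          _ = ((k : ℝ) + α) * (l : ℝ) := abs_of_nonneg hkl
      have h1 : (t * N * m) * (|(k : ℝ)| - 2) ≤ (t * N * m) * ((k : ℝ) + α) ^ 2 :=
        mul_le_mul_of_nonneg_left (hsq k) (by positivity)
      have h2 : (t * N * δ) * |(l : ℝ)| ≤ (t * N) * (((k : ℝ) + α) * (l : ℝ)) := by
        calc t * N * δ * |(l : ℝ)| = (t * N) * (δ * |(l : ℝ)|) := by ring
          _ ≤ (t * N) * (((k : ℝ) + α) * (l : ℝ)) :=
            mul_le_mul_of_nonneg_left hprod (by positivity)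
      have hexp : Real.exp (-(t * ((N : ℝ) * ((m : ℝ) * ((k : ℝ) + α) ^ 2 +
            ((k : ℝ) + α) * (l : ℝ))))) ≤
          Real.exp (2 * (t * N * m) + (-(t * N * m * |(k : ℝ)|) + -(t * N * δ * |(l : ℝ)|))) := by
        apply Real.exp_le_exp.mpr
        nlinarith [h1, h2]
      calc |Real.sign ((k : ℝ) + α) + Real.sign ((l : ℝ))| *
            Real.exp (-(t * ((N : ℝ) * ((m : ℝ) * ((k : ℝ) + α) ^ 2 +
              ((k : ℝ) + α) * (l : ℝ)))))
          ≤ 2 * Real.exp (2 * (t * N * m) +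
              (-(t * N * m * |(k : ℝ)|) + -(t * N * δ * |(l : ℝ)|))) :=
            mul_le_mul hs2 hexp (Real.exp_nonneg _) (by norm_num)
        _ = (2 * Real.exp (2 * (t * N * m)) * Real.exp (-(t * N * m * |(k : ℝ)|))) *
              Real.exp (-(t * N * δ * |(l : ℝ)|)) := by
            rw [Real.exp_add, Real.exp_add]; ring
    · have hkl2 : ((k : ℝ) + α) * (l : ℝ) < 0 := lt_of_not_ge hkl
      have hz : Real.sign ((k : ℝ) + α) + Real.sign ((l : ℝ)) = 0 := by
        rcases mul_neg_iff.mp hkl2 with ⟨h1, h2⟩ | ⟨h1, h2⟩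
        · rw [Real.sign_of_pos h1, Real.sign_of_neg h2]; ring
        · rw [Real.sign_of_neg h1, Real.sign_of_pos h2]; ring
      rw [hz]
      simp only [abs_zero, zero_mul]
      positivity
  have hg : Summable fun k : ℤ =>
      2 * Real.exp (2 * (t * N * m)) * Real.exp (-(t * N * m * |(k : ℝ)|)) :=
    (summable_exp_abs (show (0:ℝ) < t * N * m by positivity)).mul_left _
  have hh : Summable fun l : ℤ => Real.exp (-(t * N * δ * |(l : ℝ)|)) :=
    summable_exp_abs (by positivity)
  have hB : Summable fun n : ℤ × ℤ =>
      (2 * Real.exp (2 * (t * N * m)) * Real.exp (-(t * N * m * |(n.1 : ℝ)|))) *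
        Real.exp (-(t * N * δ * |(n.2 : ℝ)|)) :=
    hg.mul_of_nonneg hh (fun k => by positivity) (fun l => by positivity)
  have hF2 : Summable fun n : ℤ × ℤ => ‖F n‖ :=
    Summable.of_nonneg_of_le (fun n => norm_nonneg _) hbound hB
  have hfib : ∀ k : ℤ, Summable fun l : ℤ => ‖F (k, l)‖ :=
    fun k => ((summable_prod_of_nonneg (fun n => norm_nonneg (F n))).mp hF2).1 k
  have hmarg : Summable fun k : ℤ => ∑' l : ℤ, ‖F (k, l)‖ :=
    ((summable_prod_of_nonneg (fun n => norm_nonneg (F n))).mp hF2).2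
  have hFsum : Summable F := hF2.of_norm
  set u : ℤ → ℂ := fun k => Y * qp τ ((N : ℝ) * (k : ℝ)) with hudef
  set D : ℤ → ℂ := fun k =>
    ph (2 * (m : ℝ) * ((k : ℝ) + α) * b) * qp τ ((N : ℝ) * (m : ℝ) * ((k : ℝ) + α) ^ 2)
    with hDdef
  have hu_eq : ∀ k : ℤ, u k = ph b * qp τ ((N : ℝ) * ((k : ℝ) + α)) := by
    intro k
    rw [hudef]
    dsimp only
    rw [hY]
    simp only [qp, ph, ← Complex.exp_add]
    congr 1
    rw [hα]
    push_cast
    ring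
  have hu0 : ∀ k : ℤ, u k ≠ 0 := by
    intro k
    rw [hu_eq k]
    simp [ph, qp, Complex.exp_ne_zero]
  have hunorm : ∀ k : ℤ, ‖u k‖ = Real.exp (-(t * ((N : ℝ) * ((k : ℝ) + α)))) := by
    intro k
    rw [hu_eq k, norm_mul, norm_ph, one_mul, norm_qp, ht]
  have hN' : (0 : ℝ) < N := by exact_mod_cast hN
  have hsign : ∀ k : ℤ, (Real.sign ((k : ℝ) + α) = 1 ∧ ‖u k‖ < 1) ∨
      (Real.sign ((k : ℝ) + α) = -1 ∧ 1 < ‖u k‖) := by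
    intro k
    rcases (hka k).lt_or_gt with h | h
    · right
      refine ⟨Real.sign_of_neg h, ?_⟩
      rw [hunorm k, Real.one_lt_exp_iff]
      nlinarith [mul_pos ht0 (mul_pos hN' (neg_pos.mpr h))]
    · left
      refine ⟨Real.sign_of_pos h, ?_⟩
      rw [hunorm k, Real.exp_lt_one_iff]
      nlinarith [mul_pos ht0 (mul_pos hN' h)]
  have hFkl : ∀ k l : ℤ, F (k, l) =
      ((Real.sign ((k : ℝ) + α) + Real.sign ((l : ℝ)) : ℝ) : ℂ) * (u k) ^ l * D k := by
    intro k l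
    rw [hFdef]
    dsimp only
    simp only [← hα]
    rw [mul_assoc (((Real.sign ((k : ℝ) + α) + Real.sign ((l : ℝ)) : ℝ) : ℂ))]
    congr 1
    rw [hu_eq k, hDdef]
    dsimp only
    simp only [hY, ph, qp, ← Complex.exp_int_mul, ← Complex.exp_add]
    congr 1
    rw [hα]
    push_cast
    ring
  have hS : ∀ k : ℤ, (∑' l : ℤ, F (k, l)) = -((u k + 1) / (u k - 1)) * D k := by
    intro k
    calc (∑' l : ℤ, F (k, l))
        = ∑' l : ℤ, (((Real.sign ((k : ℝ) + α) + Real.sign ((l : ℝ)) : ℝ) : ℂ) *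
            (u k) ^ l) * D k := tsum_congr fun l => hFkl k l
      _ = (∑' l : ℤ, ((Real.sign ((k : ℝ) + α) + Real.sign ((l : ℝ)) : ℝ) : ℂ) *
            (u k) ^ l) * D k := tsum_mul_right
      _ = -((u k + 1) / (u k - 1)) * D k := by
          rw [signed_geom (hu0 k) (hsign k)]
  have pre : ∀ k : ℤ,
      Complex.exp (-(4 * Real.pi * Complex.I * (m : ℝ) * (a : ℝ) * b)) *
        (qp τ (-((N : ℝ) * (m : ℝ) * (a : ℝ) ^ 2)) * D k) =
      Y ^ (2 * k * (m : ℤ)) * qp τ ((N : ℝ) * (m : ℝ) * (k : ℝ) ^ 2) := by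
    intro k
    rw [hDdef]
    dsimp only
    simp only [hY, ph, qp, ← Complex.exp_int_mul, ← Complex.exp_add]
    congr 1
    rw [hα]
    push_cast
    ring
  have hterm : ∀ k : ℤ,
      Y ^ (2 * k * (m : ℤ)) * qp τ ((N : ℝ) * (m : ℝ) * (k : ℝ) ^ 2) *
        ((Y * qp τ ((N : ℝ) * (k : ℝ)) + 1) / (Y * qp τ ((N : ℝ) * (k : ℝ)) - 1)) =
      -(Complex.exp (-(4 * Real.pi * Complex.I * (m : ℝ) * (a : ℝ) * b)) *
        (qp τ (-((N : ℝ) * (m : ℝ) * (a : ℝ) ^ 2)) * ∑' l : ℤ, F (k, l))) := by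
    intro k
    rw [hS k]
    have huk : Y * qp τ ((N : ℝ) * (k : ℝ)) = u k := rfl
    rw [huk, ← pre k]
    ring
  refine ⟨?_, ?_, ?_⟩
  · apply Summable.of_nonneg_of_le (fun k => norm_nonneg _) ?_ (hmarg.mul_left
      (‖Complex.exp (-(4 * Real.pi * Complex.I * (m : ℝ) * (a : ℝ) * b))‖ *
        ‖qp τ (-((N : ℝ) * (m : ℝ) * (a : ℝ) ^ 2))‖))
    intro k
    rw [hterm k, norm_neg, norm_mul, norm_mul, mul_assoc]
    rw [← mul_assoc]
    apply mul_le_mul_of_nonneg_left _ (mul_nonneg (norm_nonneg _) (norm_nonneg _))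
    exact norm_tsum_le_tsum_norm (hfib k)
  · exact hF2.congr fun n => by rw [hFdef]
  · have hprodsum : (∑' n : ℤ × ℤ, F n) = ∑' k : ℤ, ∑' l : ℤ, F (k, l) :=
      hFsum.tsum_prod' fun k => (hfib k).of_norm
    calc (∑' k : ℤ, Y ^ (2 * k * (m : ℤ)) * qp τ ((N : ℝ) * (m : ℝ) * (k : ℝ) ^ 2) *
          ((Y * qp τ ((N : ℝ) * (k : ℝ)) + 1) / (Y * qp τ ((N : ℝ) * (k : ℝ)) - 1)))
        = ∑' k : ℤ, -(Complex.exp (-(4 * Real.pi * Complex.I * (m : ℝ) * (a : ℝ) * b)) *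
            (qp τ (-((N : ℝ) * (m : ℝ) * (a : ℝ) ^ 2)) * ∑' l : ℤ, F (k, l))) :=
          tsum_congr hterm
      _ = -∑' k : ℤ, Complex.exp (-(4 * Real.pi * Complex.I * (m : ℝ) * (a : ℝ) * b)) *
            (qp τ (-((N : ℝ) * (m : ℝ) * (a : ℝ) ^ 2)) * ∑' l : ℤ, F (k, l)) := tsum_neg
      _ = -(Complex.exp (-(4 * Real.pi * Complex.I * (m : ℝ) * (a : ℝ) * b)) *
            ∑' k : ℤ, qp τ (-((N : ℝ) * (m : ℝ) * (a : ℝ) ^ 2)) * ∑' l : ℤ, F (k, l)) := by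
          rw [tsum_mul_left]
      _ = -(Complex.exp (-(4 * Real.pi * Complex.I * (m : ℝ) * (a : ℝ) * b)) *
            (qp τ (-((N : ℝ) * (m : ℝ) * (a : ℝ) ^ 2)) * ∑' k : ℤ, ∑' l : ℤ, F (k, l))) := by
          rw [tsum_mul_left]
      _ = -(Complex.exp (-(4 * Real.pi * Complex.I * (m : ℝ) * (a : ℝ) * b)) *
            (qp τ (-((N : ℝ) * (m : ℝ) * (a : ℝ) ^ 2)) * ∑' n : ℤ × ℤ, F n)) := by
          rw [hprodsum]
end

section
/- Let m be a positive integer, τ ∈ ℍ, and z ∈ ℂ with 0 < Im z < Im τ; set α := Im(z)/Im(τ) and y := e^{2πiz}. Then Σ_{k∈ℤ} y^{2km} q^{mk²} / (1 − y q^k) = (1/2) Σ_{(k,l)∈ℤ²} ( sgn(k+α) + sgn(l) ) y^{2mk+l} q^{mk² + kl} + (1/2) Σ_{k∈ℤ} y^{2mk} q^{mk²}, where all series converge absolutely. -/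
open Complex Real

lemma qp_ne_zero (τ : ℂ) (c : ℝ) : qp τ c ≠ 0 := Complex.exp_ne_zero _

lemma qp_add (τ : ℂ) (a b : ℝ) : qp τ (a + b) = qp τ a * qp τ b := by
  rw [qp, qp, qp, ← Complex.exp_add]; push_cast; ring_nf

lemma qp_zpow (τ : ℂ) (c : ℝ) (l : ℤ) : (qp τ c) ^ l = qp τ (l * c) := by
  rw [qp, qp, ← Complex.exp_int_mul]; push_cast; ring_nf

lemma norm_ypow_qp (z τ : ℂ) (n : ℤ) (c : ℝ) :
    ‖Complex.exp (2 * Real.pi * Complex.I * z) ^ n * qp τ c‖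
      = Real.exp (-(2*π) * ((n:ℝ)*z.im + c*τ.im)) := by
  rw [← Complex.exp_int_mul, qp, ← Complex.exp_add, Complex.norm_exp]
  congr 1
  simp [Complex.add_re, Complex.mul_re, Complex.mul_im, Complex.I_re, Complex.I_im]
  ring

lemma summable_geom_natAbs {r : ℝ} (h0 : 0 ≤ r) (h1 : r < 1) :
    Summable fun k : ℤ => r ^ k.natAbs := by
  apply Summable.of_nat_of_neg_add_one
  · simpa using summable_geometric_of_lt_one h0 h1
  · have he : (fun n : ℕ => r ^ (-((n:ℤ) + 1)).natAbs) = fun n : ℕ => r * r ^ n := by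
      funext n
      have h : ((-((n:ℤ) + 1))).natAbs = n + 1 := by omega
      rw [h, pow_succ]; ring
    rw [he]
    exact (summable_geometric_of_lt_one h0 h1).mul_left r

lemma base_ineq (m t u : ℝ) (hm : 0 < m) (hu : 0 < u) (hut : u < t) (k : ℝ) :
    m*t*(|k|-3) ≤ 2*m*k*u + m*k^2*t := by
  nlinarith [_root_.sq_abs k, neg_abs_le k, abs_nonneg k, sq_nonneg (|k| - 2),
    mul_pos hm hu, mul_pos hm (sub_pos.mpr hut), sq_nonneg (|k|-1),
    mul_nonneg (mul_nonneg hm.le (abs_nonneg k)) (sub_pos.mpr hut).le,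
    mul_nonneg (mul_nonneg hm.le (sq_nonneg (|k|-2))) hu.le,
    mul_nonneg (mul_nonneg hm.le (sq_nonneg (|k|-2))) (sub_pos.mpr hut).le]


lemma Ekey_ineq (m t u δ k l : ℝ) (hm : 0 < m) (hu : 0 < u) (hut : u < t)
    (hδu : δ ≤ u) (hδtu : δ ≤ t - u)
    (hcase : (0 ≤ k ∧ 0 ≤ l) ∨ (k ≤ -1 ∧ l ≤ 0)) :
    m*t*(|k| - 3) + δ*|l| ≤ (2*m*k + l)*u + (m*k^2 + k*l)*t := by
  have hbase := base_ineq m t u hm hu hut k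
  rcases hcase with ⟨hk, hl⟩ | ⟨hk, hl⟩
  · rw [_root_.abs_of_nonneg hl]
    have hsum : δ ≤ u + k*t := by nlinarith [mul_nonneg hk (by linarith : (0:ℝ) ≤ t)]
    have hprod := mul_le_mul_of_nonneg_left hsum hl
    nlinarith
  · rw [_root_.abs_of_nonpos hl]
    have hsum : u + k*t ≤ -δ := by nlinarith
    have hprod := mul_le_mul_of_nonpos_left hsum hl
    nlinarith

lemma neg_mul_le_split (a X Y E : ℝ) (ha : 0 ≤ a) (h : X + Y ≤ E) :
    -a*E ≤ -a*X + -a*Y := by nlinarith [mul_le_mul_of_nonneg_left h ha]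

lemma exp_pow_natAbs (a : ℝ) (k : ℤ) :
    Real.exp (-(2*π)*a) ^ k.natAbs = Real.exp (-(2*π)*(a*|(k:ℝ)|)) := by
  rw [← Real.exp_nat_mul]
  congr 1
  rw [Nat.cast_natAbs]
  push_cast
  ring

lemma abs_real_sign_le (x : ℝ) : |Real.sign x| ≤ 1 := by
  rcases lt_trichotomy x 0 with h|h|h
  · rw [Real.sign_of_neg h]; norm_num
  · rw [h, Real.sign_zero]; norm_num
  · rw [Real.sign_of_pos h]; norm_num

lemma hasSum_pos_case (c w : ℂ) (hw : ‖w‖ < 1) :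
    HasSum (fun l : ℤ => ((1 + Real.sign ((l:ℝ)) : ℝ) : ℂ) * (c * w ^ l))
      (2 * (c / (1 - w)) - c) := by
  have hw1 : (1:ℂ) - w ≠ 0 := by
    intro h
    have hwe : w = 1 := by linear_combination -h
    rw [hwe] at hw; simp at hw
  have hgeo : HasSum (fun n : ℕ => 2*c*w^n) (2*c*(1-w)⁻¹) :=
    (hasSum_geometric_of_norm_lt_one hw).mul_left (2*c)
  have hpos := hgeo.update 0 c
  have heq : (fun n : ℕ => ((1 + Real.sign (((n:ℤ):ℝ)) : ℝ) : ℂ) * (c * w ^ ((n:ℤ))))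
      = Function.update (fun n : ℕ => 2*c*w^n) 0 c := by
    funext n
    rcases n with _ | n
    · simp [Real.sign_zero]
    · have hs : Real.sign ((((n+1:ℕ):ℤ):ℝ)) = 1 := Real.sign_of_pos (by positivity)
      rw [Function.update_of_ne (Nat.succ_ne_zero n), hs, zpow_natCast]
      norm_num
      ring
  have hneg : HasSum (fun n : ℕ =>
      ((1 + Real.sign (((-((n:ℤ)+1) : ℤ)):ℝ) : ℝ) : ℂ) * (c * w ^ (-((n:ℤ)+1)))) 0 := by
    have hz : (fun n : ℕ =>
        ((1 + Real.sign (((-((n:ℤ)+1) : ℤ)):ℝ) : ℝ) : ℂ) * (c * w ^ (-((n:ℤ)+1)))) = fun _ => 0 := by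
      funext n
      have hs : Real.sign ((((-((n:ℤ)+1) : ℤ)):ℝ)) = -1 := by
        apply Real.sign_of_neg
        push_cast
        nlinarith [Nat.cast_nonneg (α := ℝ) n]
      rw [hs]
      norm_num
    rw [hz]
    exact hasSum_zero
  have htotal : HasSum (fun l : ℤ => ((1 + Real.sign ((l:ℝ)) : ℝ) : ℂ) * (c * w ^ l))
      ((c - 2*c*w^(0:ℕ) + 2*c*(1-w)⁻¹) + 0) := by
    apply HasSum.of_nat_of_neg_add_one
    · rw [heq]; exact hpos
    · exact hneg
  convert htotal using 1
  rw [pow_zero]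
  field_simp
  ring

lemma hasSum_neg_case (c w : ℂ) (hw : 1 < ‖w‖) :
    HasSum (fun l : ℤ => ((-1 + Real.sign ((l:ℝ)) : ℝ) : ℂ) * (c * w ^ l))
      (2 * (c / (1 - w)) - c) := by
  have hw0 : w ≠ 0 := by
    intro h; rw [h] at hw; simp at hw; linarith
  have hwinv : ‖w⁻¹‖ < 1 := by
    rw [norm_inv]
    exact inv_lt_one_of_one_lt₀ hw
  have hw1 : (1:ℂ) - w ≠ 0 := by
    intro h
    have hwe : w = 1 := by linear_combination -h
    rw [hwe] at hw; simp at hw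
  have hwi1 : (1:ℂ) - w⁻¹ ≠ 0 := by
    intro h
    have hwe : w⁻¹ = 1 := by linear_combination -h
    rw [hwe] at hwinv; simp at hwinv
  have hpos : HasSum (fun n : ℕ =>
      ((-1 + Real.sign (((n:ℤ):ℝ)) : ℝ) : ℂ) * (c * w ^ ((n:ℤ)))) (-c) := by
    have heq : (fun n : ℕ => ((-1 + Real.sign (((n:ℤ):ℝ)) : ℝ) : ℂ) * (c * w ^ ((n:ℤ))))
        = fun n : ℕ => if n = 0 then -c else 0 := by
      funext n
      rcases n with _ | n
      · simp [Real.sign_zero]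
      · have hs : Real.sign ((((n+1:ℕ):ℤ):ℝ)) = 1 := Real.sign_of_pos (by positivity)
        rw [hs]
        simp
    rw [heq]
    exact hasSum_ite_eq 0 (-c)
  have hneg : HasSum (fun n : ℕ =>
      ((-1 + Real.sign (((-((n:ℤ)+1) : ℤ)):ℝ) : ℝ) : ℂ) * (c * w ^ (-((n:ℤ)+1))))
      ((-2*c*w⁻¹) * (1-w⁻¹)⁻¹) := by
    have heq : (fun n : ℕ =>
        ((-1 + Real.sign (((-((n:ℤ)+1) : ℤ)):ℝ) : ℝ) : ℂ) * (c * w ^ (-((n:ℤ)+1))))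
        = fun n : ℕ => (-2*c*w⁻¹) * (w⁻¹)^n := by
      funext n
      have hs : Real.sign ((((-((n:ℤ)+1) : ℤ)):ℝ)) = -1 := by
        apply Real.sign_of_neg
        push_cast
        nlinarith [Nat.cast_nonneg (α := ℝ) n]
      rw [hs]
      have hzp : w ^ (-((n:ℤ)+1)) = w⁻¹ * (w⁻¹)^n := by
        rw [zpow_neg]
        have h2 : ((n:ℤ)+1) = ((n+1:ℕ):ℤ) := by push_cast; ring
        rw [h2, zpow_natCast, ← inv_pow, pow_succ']
      rw [hzp]
      norm_num
      ring
    rw [heq]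
    exact (hasSum_geometric_of_norm_lt_one hwinv).mul_left _
  have htotal : HasSum (fun l : ℤ => ((-1 + Real.sign ((l:ℝ)) : ℝ) : ℂ) * (c * w ^ l))
      ((-c) + ((-2*c*w⁻¹) * (1-w⁻¹)⁻¹)) :=
    HasSum.of_nat_of_neg_add_one hpos hneg
  convert htotal using 1
  have hwm1 : w - 1 ≠ 0 := fun h => hw1 (by linear_combination -h)
  have hx : (1 - w⁻¹)⁻¹ = w * (w-1)⁻¹ := by field_simp
  rw [hx]
  field_simp
  ring

/-- For `0 < Im z < Im τ` and `α = Im z / Im τ`,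
`Σ_{k∈ℤ} y^{2km} q^{mk²}/(1 - y q^k)
  = (1/2) Σ_{(k,l)∈ℤ²} (sgn(k+α)+sgn(l)) y^{2mk+l} q^{mk²+kl} + (1/2) Σ_{k∈ℤ} y^{2mk} q^{mk²}`. -/
theorem f1_signed_expansion (m : ℕ) (hm : 0 < m) (τ z : ℂ) (hτ : 0 < τ.im)
    (hz0 : 0 < z.im) (hz1 : z.im < τ.im)
    (y : ℂ) (hy : y = Complex.exp (2 * Real.pi * Complex.I * z)) :
    Summable (fun k : ℤ =>
      ‖y ^ (2 * k * (m : ℤ)) * qp τ ((m : ℝ) * (k : ℝ) ^ 2) / (1 - y * qp τ (k : ℝ))‖) ∧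
    Summable (fun n : ℤ × ℤ =>
      ‖((Real.sign ((n.1 : ℝ) + z.im / τ.im) + Real.sign (n.2 : ℝ) : ℝ) : ℂ) *
        (y ^ (2 * (m : ℤ) * n.1 + n.2) *
          qp τ ((m : ℝ) * (n.1 : ℝ) ^ 2 + (n.1 : ℝ) * (n.2 : ℝ)))‖) ∧
    Summable (fun k : ℤ => ‖y ^ (2 * (m : ℤ) * k) * qp τ ((m : ℝ) * (k : ℝ) ^ 2)‖) ∧
    (∑' k : ℤ, y ^ (2 * k * (m : ℤ)) * qp τ ((m : ℝ) * (k : ℝ) ^ 2) / (1 - y * qp τ (k : ℝ))) =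
      (1 / 2) * (∑' n : ℤ × ℤ,
        ((Real.sign ((n.1 : ℝ) + z.im / τ.im) + Real.sign (n.2 : ℝ) : ℝ) : ℂ) *
          (y ^ (2 * (m : ℤ) * n.1 + n.2) *
            qp τ ((m : ℝ) * (n.1 : ℝ) ^ 2 + (n.1 : ℝ) * (n.2 : ℝ)))) +
      (1 / 2) * (∑' k : ℤ, y ^ (2 * (m : ℤ) * k) * qp τ ((m : ℝ) * (k : ℝ) ^ 2)) := by
  have hπ : (0:ℝ) < π := Real.pi_pos
  have h2π : (0:ℝ) < 2*π := by linarith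
  have hm' : (0:ℝ) < (m:ℝ) := by exact_mod_cast hm
  set u := z.im with hu
  set t := τ.im with ht
  have hy0 : y ≠ 0 := by rw [hy]; exact Complex.exp_ne_zero _
  have hnorm : ∀ (n : ℤ) (c : ℝ), ‖y ^ n * qp τ c‖ = Real.exp (-(2*π) * ((n:ℝ)*u + c*t)) := by
    intro n c; rw [hy]; exact norm_ypow_qp z τ n c
  have hw_norm : ∀ k : ℤ, ‖y * qp τ (k:ℝ)‖ = Real.exp (-(2*π) * (u + (k:ℝ)*t)) := by
    intro k
    have := hnorm 1 (k:ℝ)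
    simpa using this
  -- sign evaluations
  have hsk_pos : ∀ k : ℤ, 0 ≤ k → Real.sign ((k:ℝ) + u/t) = 1 := by
    intro k hk
    apply Real.sign_of_pos
    have h1 : (0:ℝ) ≤ (k:ℝ) := by exact_mod_cast hk
    have h2 : 0 < u/t := div_pos hz0 hτ
    linarith
  have hsk_neg : ∀ k : ℤ, k < 0 → Real.sign ((k:ℝ) + u/t) = -1 := by
    intro k hk
    apply Real.sign_of_neg
    have h1 : (k:ℝ) ≤ -1 := by exact_mod_cast (by omega : k ≤ -1)
    have h2 : u/t < 1 := (div_lt_one hτ).mpr hz1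
    linarith
  -- w bounds
  have hwlt : ∀ k : ℤ, 0 ≤ k → ‖y * qp τ (k:ℝ)‖ < 1 := by
    intro k hk
    rw [hw_norm]
    apply Real.exp_lt_one_iff.mpr
    have h1 : (0:ℝ) ≤ (k:ℝ) := by exact_mod_cast hk
    have h2 : 0 < u + (k:ℝ)*t := by nlinarith [mul_nonneg h1 hτ.le]
    nlinarith [mul_pos h2π h2]
  have hwgt : ∀ k : ℤ, k < 0 → 1 < ‖y * qp τ (k:ℝ)‖ := by
    intro k hk
    rw [hw_norm]
    apply Real.one_lt_exp_iff.mpr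
    have h1 : (k:ℝ) ≤ -1 := by exact_mod_cast (by omega : k ≤ -1)
    have hkt : (k:ℝ)*t ≤ -1*t := mul_le_mul_of_nonneg_right h1 hτ.le
    have h2 : u + (k:ℝ)*t < 0 := by linarith
    nlinarith [mul_pos h2π (neg_pos.mpr h2)]
  -- denominator lower bound
  set c0 := min (1 - Real.exp (-(2*π)*u)) (Real.exp (-(2*π)*(u - t)) - 1) with hc0def
  have hc0pos : 0 < c0 := by
    apply lt_min
    · have : Real.exp (-(2*π)*u) < 1 := Real.exp_lt_one_iff.mpr (by nlinarith)
      linarith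
    · have : 1 < Real.exp (-(2*π)*(u - t)) := Real.one_lt_exp_iff.mpr (by nlinarith)
      linarith
  have hden : ∀ k : ℤ, c0 ≤ ‖1 - y * qp τ (k:ℝ)‖ := by
    intro k
    rcases le_or_gt 0 k with hk|hk
    · have hkr : (0:ℝ) ≤ (k:ℝ) := by exact_mod_cast hk
      have h1 : ‖y * qp τ (k:ℝ)‖ ≤ Real.exp (-(2*π)*u) := by
        rw [hw_norm]
        apply Real.exp_le_exp.mpr
        have h0 : u ≤ u + (k:ℝ)*t := by nlinarith [mul_nonneg hkr hτ.le]
        nlinarith [mul_le_mul_of_nonpos_left h0 (by linarith : -(2*π) ≤ 0)]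
      have h2 := norm_sub_norm_le (1:ℂ) (y * qp τ (k:ℝ))
      simp only [norm_one] at h2
      have h3 := min_le_left (1 - Real.exp (-(2*π)*u)) (Real.exp (-(2*π)*(u - t)) - 1)
      linarith
    · have hkr : (k:ℝ) ≤ -1 := by exact_mod_cast (by omega : k ≤ -1)
      have h1 : Real.exp (-(2*π)*(u - t)) ≤ ‖y * qp τ (k:ℝ)‖ := by
        rw [hw_norm]
        apply Real.exp_le_exp.mpr
        have hkt : (k:ℝ)*t ≤ -1*t := mul_le_mul_of_nonneg_right hkr hτ.le
        have h0 : u + (k:ℝ)*t ≤ u - t := by linarith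
        nlinarith [mul_le_mul_of_nonpos_left h0 (by linarith : -(2*π) ≤ 0)]
      have h2 := norm_sub_norm_le (y * qp τ (k:ℝ)) (1:ℂ)
      simp only [norm_one] at h2
      rw [norm_sub_rev] at h2
      have h3 := min_le_right (1 - Real.exp (-(2*π)*u)) (Real.exp (-(2*π)*(u - t)) - 1)
      linarith
  -- geometric majorant for the simple series
  set r1 := Real.exp (-(2*π)*((m:ℝ)*t)) with hr1def
  have hr1a : (0:ℝ) ≤ r1 := Real.exp_nonneg _
  have hr1b : r1 < 1 := Real.exp_lt_one_iff.mpr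
    (by nlinarith [mul_pos h2π (mul_pos hm' hτ)])
  set B : ℤ → ℝ := fun k => Real.exp (2*π*((m:ℝ)*t*3)) * r1 ^ k.natAbs with hBdef
  have hBeq : ∀ k : ℤ, B k = Real.exp (-(2*π)*((m:ℝ)*t*(|(k:ℝ)| - 3))) := by
    intro k
    rw [hBdef]
    dsimp only
    rw [hr1def, exp_pow_natAbs, ← Real.exp_add]
    congr 1
    ring
  have hBpos : ∀ k, 0 < B k := fun k => by rw [hBeq]; positivity
  have hBsum : Summable B := (summable_geom_natAbs hr1a hr1b).mul_left _
  have hCbound : ∀ k : ℤ, ‖y ^ (2*(m:ℤ)*k) * qp τ ((m:ℝ)*(k:ℝ)^2)‖ ≤ B k := by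
    intro k
    rw [hnorm, hBeq]
    apply Real.exp_le_exp.mpr
    have hb := base_ineq (m:ℝ) t u hm' hz0 hz1 (k:ℝ)
    push_cast
    nlinarith [mul_le_mul_of_nonneg_left hb h2π.le]
  have hS3 : Summable (fun k : ℤ => ‖y ^ (2*(m:ℤ)*k) * qp τ ((m:ℝ)*(k:ℝ)^2)‖) :=
    Summable.of_nonneg_of_le (fun _ => norm_nonneg _) hCbound hBsum
  have hee : ∀ k : ℤ, 2*k*(m:ℤ) = 2*(m:ℤ)*k := fun k => by ring
  have hS1 : Summable (fun k : ℤ =>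
      ‖y ^ (2*k*(m:ℤ)) * qp τ ((m:ℝ)*(k:ℝ)^2) / (1 - y * qp τ (k:ℝ))‖) := by
    apply Summable.of_nonneg_of_le (fun _ => norm_nonneg _) ?_ (hBsum.mul_left c0⁻¹)
    intro k
    rw [norm_div, hee k]
    calc ‖y ^ (2*(m:ℤ)*k) * qp τ ((m:ℝ)*(k:ℝ)^2)‖ / ‖1 - y * qp τ (k:ℝ)‖
        ≤ B k / c0 := div_le_div₀ (hBpos k).le (hCbound k) hc0pos (hden k)
      _ = c0⁻¹ * B k := div_eq_inv_mul _ _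
  -- the double series
  set δ := min u (t - u) with hδdef
  have hδpos : 0 < δ := lt_min hz0 (by linarith)
  have hδu : δ ≤ u := min_le_left _ _
  have hδtu : δ ≤ t - u := min_le_right _ _
  have hr2a : (0:ℝ) ≤ Real.exp (-(2*π)*δ) := Real.exp_nonneg _
  have hr2b : Real.exp (-(2*π)*δ) < 1 := Real.exp_lt_one_iff.mpr
    (by nlinarith [mul_pos h2π hδpos])
  have hS2 : Summable (fun n : ℤ × ℤ =>
      ‖((Real.sign ((n.1 : ℝ) + u / t) + Real.sign ((n.2 : ℝ)) : ℝ) : ℂ) *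
        (y ^ (2 * (m : ℤ) * n.1 + n.2) *
          qp τ ((m : ℝ) * (n.1 : ℝ) ^ 2 + (n.1 : ℝ) * (n.2 : ℝ)))‖) := by
    apply Summable.of_nonneg_of_le (fun _ => norm_nonneg _) ?_
      (Summable.mul_of_nonneg (hBsum.mul_left 2)
        (summable_geom_natAbs hr2a hr2b)
        (Pi.le_def.mpr fun k => by
          simp only [Pi.zero_apply]
          nlinarith [hBpos k])
        (Pi.le_def.mpr fun l => by
          simp only [Pi.zero_apply]
          positivity))
    rintro ⟨k, l⟩
    dsimp only
    rw [norm_mul, Complex.norm_real, Real.norm_eq_abs, hnorm, hBeq, exp_pow_natAbs]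
    by_cases hs : Real.sign ((k:ℝ) + u/t) + Real.sign ((l:ℝ)) = 0
    · rw [hs]
      simp only [abs_zero, zero_mul]
      positivity
    · have habs : |Real.sign ((k:ℝ) + u/t) + Real.sign ((l:ℝ))| ≤ 2 := by
        have h1 := abs_real_sign_le ((k:ℝ) + u/t)
        have h2 := abs_real_sign_le ((l:ℝ))
        calc |Real.sign ((k:ℝ) + u/t) + Real.sign ((l:ℝ))|
            ≤ |Real.sign ((k:ℝ) + u/t)| + |Real.sign ((l:ℝ))| := abs_add_le _ _
          _ ≤ 2 := by linarith
      have hcase : ((0:ℝ) ≤ (k:ℝ) ∧ (0:ℝ) ≤ (l:ℝ)) ∨ ((k:ℝ) ≤ -1 ∧ (l:ℝ) ≤ 0) := by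
        rcases lt_trichotomy l 0 with hl|hl|hl
        · have hsl : Real.sign ((l:ℝ)) = -1 :=
            Real.sign_of_neg (by exact_mod_cast hl)
          have hk : k < 0 := by
            by_contra hk'
            push_neg at hk'
            rw [hsk_pos k hk', hsl] at hs
            norm_num at hs
          exact Or.inr ⟨by exact_mod_cast (by omega : k ≤ -1), by exact_mod_cast hl.le⟩
        · rcases le_or_gt 0 k with hk|hk
          · exact Or.inl ⟨by exact_mod_cast hk, by rw [hl]; norm_num⟩
          · exact Or.inr ⟨by exact_mod_cast (by omega : k ≤ -1), by rw [hl]; norm_num⟩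
        · have hsl : Real.sign ((l:ℝ)) = 1 :=
            Real.sign_of_pos (by exact_mod_cast hl)
          have hk : 0 ≤ k := by
            by_contra hk'
            push_neg at hk'
            rw [hsk_neg k hk', hsl] at hs
            norm_num at hs
          exact Or.inl ⟨by exact_mod_cast hk, by exact_mod_cast hl.le⟩
      have hEkey : (m:ℝ)*t*(|(k:ℝ)| - 3) + δ*|(l:ℝ)|
          ≤ ((2*(m:ℤ)*k + l : ℤ):ℝ)*u + ((m:ℝ)*(k:ℝ)^2 + (k:ℝ)*(l:ℝ))*t := by
        push_cast
        exact Ekey_ineq (m:ℝ) t u δ (k:ℝ) (l:ℝ) hm' hz0 hz1 hδu hδtu hcase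
      have hstep : Real.exp (-(2*π) * (((2*(m:ℤ)*k + l : ℤ):ℝ)*u + ((m:ℝ)*(k:ℝ)^2 + (k:ℝ)*(l:ℝ))*t))
          ≤ Real.exp (-(2*π)*((m:ℝ)*t*(|(k:ℝ)| - 3))) * Real.exp (-(2*π)*(δ*|(l:ℝ)|)) := by
        rw [← Real.exp_add]
        apply Real.exp_le_exp.mpr
        exact neg_mul_le_split (2*π) _ _ _ h2π.le hEkey
      calc |Real.sign ((k:ℝ) + u/t) + Real.sign ((l:ℝ))| *
            Real.exp (-(2*π) * (((2*(m:ℤ)*k + l : ℤ):ℝ)*u + ((m:ℝ)*(k:ℝ)^2 + (k:ℝ)*(l:ℝ))*t))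
          ≤ 2 * Real.exp (-(2*π) * (((2*(m:ℤ)*k + l : ℤ):ℝ)*u + ((m:ℝ)*(k:ℝ)^2 + (k:ℝ)*(l:ℝ))*t)) :=
            mul_le_mul_of_nonneg_right habs (Real.exp_nonneg _)
        _ ≤ 2 * (Real.exp (-(2*π)*((m:ℝ)*t*(|(k:ℝ)| - 3))) * Real.exp (-(2*π)*(δ*|(l:ℝ)|))) :=
            mul_le_mul_of_nonneg_left hstep (by norm_num)
        _ = 2 * Real.exp (-(2*π)*((m:ℝ)*t*(|(k:ℝ)| - 3))) * Real.exp (-(2*π)*(δ*|(l:ℝ)|)) := by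
            ring
  -- product decomposition
  have hprodf : ∀ (k l : ℤ), y ^ (2*(m:ℤ)*k + l) * qp τ ((m:ℝ)*(k:ℝ)^2 + (k:ℝ)*(l:ℝ))
      = (y ^ (2*(m:ℤ)*k) * qp τ ((m:ℝ)*(k:ℝ)^2)) * (y * qp τ (k:ℝ)) ^ l := by
    intro k l
    rw [zpow_add₀ hy0, qp_add, mul_comm ((k:ℝ)) ((l:ℝ)), mul_zpow, qp_zpow]
    ring
  -- per-k geometric summation
  have hkey : ∀ k : ℤ, HasSum (fun l : ℤ =>
      ((Real.sign ((k:ℝ) + u/t) + Real.sign ((l:ℝ)) : ℝ):ℂ) *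
        (y ^ (2*(m:ℤ)*k + l) * qp τ ((m:ℝ)*(k:ℝ)^2 + (k:ℝ)*(l:ℝ))))
      (2 * ((y ^ (2*(m:ℤ)*k) * qp τ ((m:ℝ)*(k:ℝ)^2)) / (1 - y * qp τ (k:ℝ)))
        - (y ^ (2*(m:ℤ)*k) * qp τ ((m:ℝ)*(k:ℝ)^2))) := by
    intro k
    rcases le_or_gt 0 k with hk|hk
    · have hgeo := hasSum_pos_case (y ^ (2*(m:ℤ)*k) * qp τ ((m:ℝ)*(k:ℝ)^2))
        (y * qp τ (k:ℝ)) (hwlt k hk)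
      have hfun : (fun l : ℤ =>
          ((Real.sign ((k:ℝ) + u/t) + Real.sign ((l:ℝ)) : ℝ):ℂ) *
            (y ^ (2*(m:ℤ)*k + l) * qp τ ((m:ℝ)*(k:ℝ)^2 + (k:ℝ)*(l:ℝ))))
          = fun l : ℤ => ((1 + Real.sign ((l:ℝ)) : ℝ):ℂ) *
            ((y ^ (2*(m:ℤ)*k) * qp τ ((m:ℝ)*(k:ℝ)^2)) * (y * qp τ (k:ℝ)) ^ l) := by
        funext l
        rw [hsk_pos k hk, hprodf k l]
      rw [hfun]
      exact hgeo
    · have hgeo := hasSum_neg_case (y ^ (2*(m:ℤ)*k) * qp τ ((m:ℝ)*(k:ℝ)^2))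
        (y * qp τ (k:ℝ)) (hwgt k hk)
      have hfun : (fun l : ℤ =>
          ((Real.sign ((k:ℝ) + u/t) + Real.sign ((l:ℝ)) : ℝ):ℂ) *
            (y ^ (2*(m:ℤ)*k + l) * qp τ ((m:ℝ)*(k:ℝ)^2 + (k:ℝ)*(l:ℝ))))
          = fun l : ℤ => ((-1 + Real.sign ((l:ℝ)) : ℝ):ℂ) *
            ((y ^ (2*(m:ℤ)*k) * qp τ ((m:ℝ)*(k:ℝ)^2)) * (y * qp τ (k:ℝ)) ^ l) := by
        funext l
        rw [hsk_neg k hk, hprodf k l]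
      rw [hfun]
      exact hgeo
  -- assembly
  refine ⟨hS1, hS2, hS3, ?_⟩
  have hT : Summable (fun k : ℤ =>
      y ^ (2*(m:ℤ)*k) * qp τ ((m:ℝ)*(k:ℝ)^2) / (1 - y * qp τ (k:ℝ))) := by
    have h := hS1.of_norm
    simp only [hee] at h
    exact h
  have hCsum : Summable (fun k : ℤ => y ^ (2*(m:ℤ)*k) * qp τ ((m:ℝ)*(k:ℝ)^2)) := hS3.of_norm
  have hFsum : Summable (fun n : ℤ × ℤ =>
      ((Real.sign ((n.1 : ℝ) + u / t) + Real.sign ((n.2 : ℝ)) : ℝ) : ℂ) *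
        (y ^ (2 * (m : ℤ) * n.1 + n.2) *
          qp τ ((m : ℝ) * (n.1 : ℝ) ^ 2 + (n.1 : ℝ) * (n.2 : ℝ)))) := hS2.of_norm
  have h4 : (∑' n : ℤ × ℤ,
      ((Real.sign ((n.1 : ℝ) + u / t) + Real.sign ((n.2 : ℝ)) : ℝ) : ℂ) *
        (y ^ (2 * (m : ℤ) * n.1 + n.2) *
          qp τ ((m : ℝ) * (n.1 : ℝ) ^ 2 + (n.1 : ℝ) * (n.2 : ℝ))))
      = 2 * (∑' k : ℤ, y ^ (2*(m:ℤ)*k) * qp τ ((m:ℝ)*(k:ℝ)^2) / (1 - y * qp τ (k:ℝ)))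
        - ∑' k : ℤ, y ^ (2*(m:ℤ)*k) * qp τ ((m:ℝ)*(k:ℝ)^2) := by
    rw [Summable.tsum_prod' hFsum (fun b => (hkey b).summable)]
    have h5 : ∀ k : ℤ, (∑' l : ℤ,
        ((Real.sign ((k:ℝ) + u/t) + Real.sign ((l:ℝ)) : ℝ):ℂ) *
          (y ^ (2*(m:ℤ)*k + l) * qp τ ((m:ℝ)*(k:ℝ)^2 + (k:ℝ)*(l:ℝ))))
        = 2 * (y ^ (2*(m:ℤ)*k) * qp τ ((m:ℝ)*(k:ℝ)^2) / (1 - y * qp τ (k:ℝ)))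
          - y ^ (2*(m:ℤ)*k) * qp τ ((m:ℝ)*(k:ℝ)^2) := fun k => (hkey k).tsum_eq
    rw [tsum_congr h5, Summable.tsum_sub (hT.mul_left 2) hCsum, tsum_mul_left]
  simp only [hee]
  rw [h4]
  ring
end
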